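/- Let c ≥ 1/2 and K > 0. There exists a constant C = C(c, K) such that for every sequence a = (a_n)_{n≥0} of complex numbers with ‖a‖_{c,K} < ∞, the series defining (D a)_n = (n+2) Σ_{m > n, m − n odd} a_m converges absolutely for every n, and for every n ≥ 1 one has ‖D a‖_{c,K,n} = (n/K)^{c n} |(D a)_n| ≤ C · n^{1−c} · sup_{m ≥ n+1} ‖a‖_{c,K,m}. -/

import Mathlib

open MeasureTheory Real Filter Finset

/-- `‖a‖_{c,K,n} = (n/K)^{c n} |a_n|` (with `(0/K)^0 = 1`, which is `Real.rpow`'s convention). -/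
noncomputable def seqNorm (c K : ℝ) (a : ℕ → ℂ) (n : ℕ) : ℝ :=
  ((n : ℝ) / K) ^ (c * n) * ‖a n‖

/-- The operator `D`: `(D a)_n = (n+2) Σ_{m > n, m − n odd} a_m`, i.e.
`(D a)_n = (n+2) Σ_{j≥0} a_{n+2j+1}` (interpreted via `tsum`). -/
noncomputable def Dop (a : ℕ → ℂ) (n : ℕ) : ℂ :=
  ((n : ℂ) + 2) * ∑' j : ℕ, a (n + 2 * j + 1)

lemma sumLemma (c K : ℝ) (hc : 1 / 2 ≤ c) (hK : 0 < K) :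
    ∃ M : ℝ, 0 ≤ M ∧ ∀ m : ℕ, 1 ≤ m →
      (K / (m : ℝ)) ^ (c * m) ≤ M * ((2 : ℝ) ^ (-c)) ^ m := by
  have hc0 : (0:ℝ) ≤ c := by linarith
  set r : ℝ := (2 : ℝ) ^ (-c) with hrdef
  have hr0 : 0 < r := rpow_pos_of_pos two_pos _
  set A : ℝ := (max 1 K) ^ (c * (2 * K)) * (2:ℝ) ^ (c * (2 * K)) with hAdef
  have hA0 : 0 ≤ A := by positivity
  refine ⟨1 + A, by positivity, ?_⟩
  intro m hm
  have hm0 : (0:ℝ) < m := by exact_mod_cast hm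
  have hrm : r ^ m = (2:ℝ) ^ (-(c * m)) := by
    rw [hrdef, ← rpow_natCast ((2:ℝ)^(-c)) m, ← rpow_mul (by norm_num)]
    ring_nf
  by_cases hcase : 2 * K ≤ (m : ℝ)
  · have h1 : K / m ≤ 1/2 := by
      rw [div_le_div_iff₀ hm0 two_pos]; linarith
    calc (K / m) ^ (c * m) ≤ ((1:ℝ)/2) ^ (c * m) :=
          rpow_le_rpow (by positivity) h1 (by positivity)
      _ = r ^ m := by
          rw [hrm, one_div, inv_rpow (by norm_num),
            ← rpow_neg (by norm_num : (0:ℝ) ≤ 2)]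
      _ ≤ (1 + A) * r ^ m := by
          nlinarith [pow_nonneg hr0.le m]
  · push_neg at hcase
    have h2 : (K / m) ^ (c * m) ≤ (max 1 K) ^ (c * (2*K)) := by
      calc (K / m) ^ (c * m) ≤ (max 1 K) ^ (c * m) := by
            apply rpow_le_rpow (by positivity) ?_ (by positivity)
            calc K / (m:ℝ) ≤ K / 1 := by
                  apply div_le_div_of_nonneg_left hK.le one_pos (by exact_mod_cast hm)
              _ ≤ max 1 K := by simpa using le_max_right 1 K
        _ ≤ (max 1 K) ^ (c * (2*K)) := by
            apply rpow_le_rpow_of_exponent_le (le_max_left 1 K)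
            nlinarith
    have h3 : (2:ℝ) ^ (-(c * (2*K))) ≤ r ^ m := by
      rw [hrm]
      apply rpow_le_rpow_of_exponent_le one_le_two
      nlinarith
    have h4 : (2:ℝ) ^ (c * (2*K)) * (2:ℝ) ^ (-(c * (2*K))) = 1 := by
      rw [← rpow_add two_pos]; simp
    calc (K / m) ^ (c * m) ≤ (max 1 K) ^ (c * (2*K)) * ((2:ℝ) ^ (c * (2*K)) * (2:ℝ) ^ (-(c * (2*K)))) := by
          rw [h4, mul_one]; exact h2
      _ ≤ (1 + A) * r ^ m := by
          rw [hAdef]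
          have := rpow_pos_of_pos (lt_of_lt_of_le one_pos (le_max_left 1 K)) (c * (2*K))
          have h2pos := rpow_pos_of_pos (two_pos (α := ℝ)) (c * (2*K))
          nlinarith [mul_le_mul_of_nonneg_left h3 (mul_nonneg this.le h2pos.le), pow_nonneg hr0.le m]

lemma keyLemma (c K : ℝ) (hc : 1 / 2 ≤ c) (hK : 0 < K) :
    ∃ B : ℝ, 0 < B ∧ ∀ n j : ℕ, 1 ≤ n →
      (K / ((n:ℝ) + 2*j + 1)) ^ (c * (2*(j:ℝ)+1)) ≤
        B * (n:ℝ) ^ (-c) * ((4:ℝ) ^ (-c)) ^ j := by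
  have hc0 : (0:ℝ) ≤ c := by linarith
  set q : ℝ := (4:ℝ) ^ (-c) with hqdef
  have hq0 : 0 < q := rpow_pos_of_pos (by norm_num) _
  set M : ℝ := (max 1 K) ^ (c * (2*K+1)) with hMdef
  have hM0 : 0 < M := rpow_pos_of_pos (lt_of_lt_of_le one_pos (le_max_left 1 K)) _
  set B : ℝ := K ^ c + M * (2*K) ^ c * (4:ℝ) ^ (c*K) with hBdef
  have hKc0 : 0 < K ^ c := rpow_pos_of_pos hK _
  have h2K0 : (0:ℝ) < 2*K := by linarith
  have hB2 : 0 < M * (2*K) ^ c * (4:ℝ) ^ (c*K) := by positivity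
  refine ⟨B, by positivity, ?_⟩
  intro n j hn
  have hn0 : (0:ℝ) < n := by exact_mod_cast hn
  set m : ℝ := (n:ℝ) + 2*j + 1 with hmdef
  have hm0 : (0:ℝ) < m := by positivity
  have hnm : (n:ℝ) ≤ m := by
    have : (0:ℝ) ≤ 2*(j:ℝ) + 1 := by positivity
    linarith
  have hKm : 0 < K / m := div_pos hK hm0
  have hqj : q ^ j = (4:ℝ) ^ (-(c*(j:ℝ))) := by
    rw [hqdef, ← rpow_natCast ((4:ℝ)^(-c)) j, ← rpow_mul (by norm_num)]
    ring_nf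
  by_cases hcase : 2*K ≤ m
  · have hsplit : (K/m) ^ (c*(2*(j:ℝ)+1)) = (K/m) ^ c * ((K/m) ^ (2*c)) ^ j := by
      rw [← rpow_natCast ((K/m) ^ (2*c)) j, ← rpow_mul hKm.le, ← rpow_add hKm]
      ring_nf
    have h12 : K/m ≤ 1/2 := by
      rw [div_le_div_iff₀ hm0 two_pos]; linarith
    have h4 : (K/m) ^ (2*c) ≤ q := by
      calc (K/m) ^ (2*c) ≤ ((1:ℝ)/2) ^ (2*c) :=
            rpow_le_rpow hKm.le h12 (by positivity)
        _ = q := by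
            rw [hqdef, one_div, inv_rpow (by norm_num),
              ← rpow_neg (by norm_num : (0:ℝ) ≤ 2),
              show (4:ℝ) = (2:ℝ) ^ (2:ℝ) by
                rw [show (2:ℝ) = ((2:ℕ):ℝ) by norm_num, rpow_natCast]; norm_num,
              ← rpow_mul (by norm_num)]
            ring_nf
    have h2 : (K/m) ^ c ≤ K ^ c * (n:ℝ) ^ (-c) := by
      calc (K/m) ^ c ≤ (K/(n:ℝ)) ^ c :=
            rpow_le_rpow hKm.le (div_le_div_of_nonneg_left hK.le hn0 hnm) hc0
        _ = K ^ c * (n:ℝ) ^ (-c) := by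
            rw [div_rpow hK.le hn0.le, rpow_neg hn0.le, div_eq_mul_inv]
    calc (K/m) ^ (c*(2*(j:ℝ)+1)) = (K/m) ^ c * ((K/m) ^ (2*c)) ^ j := hsplit
      _ ≤ (K ^ c * (n:ℝ) ^ (-c)) * q ^ j := by
          apply mul_le_mul h2 (pow_le_pow_left₀ (rpow_nonneg hKm.le _) h4 j)
            (pow_nonneg (rpow_nonneg hKm.le _) j) (by positivity)
      _ ≤ B * (n:ℝ) ^ (-c) * q ^ j := by
          have hKB : K ^ c ≤ B := by rw [hBdef]; linarith
          have hnn : (0:ℝ) ≤ (n:ℝ) ^ (-c) := rpow_nonneg hn0.le _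
          have hqn : (0:ℝ) ≤ q ^ j := pow_nonneg hq0.le j
          exact mul_le_mul_of_nonneg_right (mul_le_mul_of_nonneg_right hKB hnn) hqn
  · push_neg at hcase
    have hjK : (j:ℝ) ≤ K := by nlinarith [hn0]
    have hn2K : (n:ℝ) ≤ 2*K := by nlinarith
    have hLHS : (K/m) ^ (c*(2*(j:ℝ)+1)) ≤ M := by
      calc (K/m) ^ (c*(2*(j:ℝ)+1)) ≤ (max 1 K) ^ (c*(2*(j:ℝ)+1)) := by
            apply rpow_le_rpow hKm.le ?_ (by positivity)
            calc K/m ≤ K/1 := div_le_div_of_nonneg_left hK.le one_pos (by linarith)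
              _ ≤ max 1 K := by simp
        _ ≤ M := by
            rw [hMdef]
            apply rpow_le_rpow_of_exponent_le (le_max_left 1 K)
            nlinarith
    have e1 : (2*K) ^ c * (2*K) ^ (-c) = 1 := by
      rw [← rpow_add h2K0]; simp
    have e2 : (4:ℝ) ^ (c*K) * (4:ℝ) ^ (-(c*K)) = 1 := by
      rw [← rpow_add (by norm_num : (0:ℝ) < 4)]; simp
    have hn' : (2*K) ^ (-c) ≤ (n:ℝ) ^ (-c) :=
      rpow_le_rpow_of_nonpos hn0 hn2K (by linarith)
    have hq' : (4:ℝ) ^ (-(c*K)) ≤ q ^ j := by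
      rw [hqj]
      apply rpow_le_rpow_of_exponent_le (by norm_num)
      nlinarith
    have t1 : M * (2*K) ^ c * (4:ℝ) ^ (c*K) ≤ B := by rw [hBdef]; linarith
    have hnn : (0:ℝ) ≤ (n:ℝ) ^ (-c) := rpow_nonneg hn0.le _
    have hqn : (0:ℝ) ≤ q ^ j := pow_nonneg hq0.le j
    have u1 : (1:ℝ) ≤ (2*K) ^ c * (n:ℝ) ^ (-c) := by
      calc (1:ℝ) = (2*K) ^ c * (2*K) ^ (-c) := e1.symm
        _ ≤ _ := mul_le_mul_of_nonneg_left hn' (rpow_nonneg h2K0.le c)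
    have u2 : (1:ℝ) ≤ (4:ℝ) ^ (c*K) * q ^ j := by
      calc (1:ℝ) = (4:ℝ) ^ (c*K) * (4:ℝ) ^ (-(c*K)) := e2.symm
        _ ≤ _ := mul_le_mul_of_nonneg_left hq' (rpow_nonneg (by norm_num) _)
    calc (K/m) ^ (c*(2*(j:ℝ)+1)) ≤ M := hLHS
      _ = M * 1 * 1 := by ring
      _ ≤ M * ((2*K) ^ c * (n:ℝ) ^ (-c)) * ((4:ℝ) ^ (c*K) * q ^ j) := by
          apply mul_le_mul (mul_le_mul le_rfl u1 zero_le_one hM0.le) u2 zero_le_one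
          positivity
      _ = (M * (2*K) ^ c * (4:ℝ) ^ (c*K)) * (n:ℝ) ^ (-c) * q ^ j := by ring
      _ ≤ B * (n:ℝ) ^ (-c) * q ^ j :=
          mul_le_mul_of_nonneg_right (mul_le_mul_of_nonneg_right t1 hnn) hqn

lemma seqNorm_nonneg (c K : ℝ) (hK : 0 < K) (a : ℕ → ℂ) (n : ℕ) : 0 ≤ seqNorm c K a n :=
  mul_nonneg (Real.rpow_nonneg (div_nonneg (Nat.cast_nonneg n) hK.le) _) (norm_nonneg _)

set_option maxHeartbeats 1000000 in
theorem Dop_bound (c K : ℝ) (hc : 1 / 2 ≤ c) (hK : 0 < K) :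
    ∃ C : ℝ, ∀ a : ℕ → ℂ, BddAbove (Set.range (seqNorm c K a)) →
      (∀ n : ℕ, Summable (fun j : ℕ => a (n + 2 * j + 1))) ∧
      ∀ n : ℕ, 1 ≤ n →
        seqNorm c K (Dop a) n ≤
          C * (n : ℝ) ^ (1 - c) * ⨆ j : ℕ, seqNorm c K a (n + 1 + j) := by
  have hc0 : (0:ℝ) ≤ c := by linarith
  obtain ⟨M, hM0, hMkey⟩ := sumLemma c K hc hK
  obtain ⟨B, hB0, hBkey⟩ := keyLemma c K hc hK
  set q : ℝ := (4:ℝ) ^ (-c) with hqdef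
  have hq0 : 0 < q := rpow_pos_of_pos (by norm_num) _
  have hq1 : q < 1 := rpow_lt_one_of_one_lt_of_neg (by norm_num) (by linarith)
  set r : ℝ := (2:ℝ) ^ (-c) with hrdef
  have hr0 : 0 < r := rpow_pos_of_pos (by norm_num) _
  have hr1 : r < 1 := rpow_lt_one_of_one_lt_of_neg (by norm_num) (by linarith)
  refine ⟨3 * B / (1 - q), ?_⟩
  intro a ha
  obtain ⟨S₀, hS₀⟩ := ha
  have hS₀' : ∀ k, seqNorm c K a k ≤ S₀ := fun k => hS₀ (Set.mem_range_self k)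
  have hS₀nn : 0 ≤ S₀ := le_trans (seqNorm_nonneg c K hK a 0) (hS₀' 0)
  have habs : ∀ m : ℕ, 1 ≤ m →
      ‖a m‖ = seqNorm c K a m * (K / (m:ℝ)) ^ (c * (m:ℝ)) := by
    intro m hm
    have hm0 : (0:ℝ) < m := by exact_mod_cast hm
    have h1 : ((m:ℝ)/K) ^ (c*(m:ℝ)) * (K/(m:ℝ)) ^ (c*(m:ℝ)) = 1 := by
      rw [← mul_rpow (by positivity) (by positivity),
        show (m:ℝ)/K * (K/(m:ℝ)) = 1 by field_simp]
      simp
    unfold seqNorm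
    calc ‖a m‖
        = ((m:ℝ)/K) ^ (c*(m:ℝ)) * (K/(m:ℝ)) ^ (c*(m:ℝ)) * ‖a m‖ := by
          rw [h1]; ring
      _ = _ := by ring
  have hbound : ∀ n j : ℕ, ‖a (n + 2*j + 1)‖ ≤ (S₀ * M) * (r^2)^j := by
    intro n j
    have hm1 : 1 ≤ n + 2*j + 1 := by omega
    calc ‖a (n + 2*j + 1)‖
        = seqNorm c K a (n+2*j+1) * (K / ((n+2*j+1:ℕ):ℝ)) ^ (c * ((n+2*j+1:ℕ):ℝ)) :=
          habs _ hm1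
      _ ≤ S₀ * (M * r ^ (n+2*j+1)) :=
          mul_le_mul (hS₀' _) (hMkey _ hm1)
            (rpow_nonneg (div_nonneg hK.le (Nat.cast_nonneg _)) _) hS₀nn
      _ ≤ S₀ * (M * r ^ (2*j)) := by
          have h := pow_le_pow_of_le_one hr0.le hr1.le (show 2*j ≤ n+2*j+1 by omega)
          have := mul_le_mul_of_nonneg_left h hM0
          exact mul_le_mul_of_nonneg_left this hS₀nn
      _ = (S₀ * M) * (r^2)^j := by rw [pow_mul]; ring
  have hsum : ∀ n : ℕ, Summable (fun j : ℕ => ‖a (n + 2*j + 1)‖) := by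
    intro n
    exact Summable.of_nonneg_of_le (fun j => norm_nonneg _) (hbound n)
      ((summable_geometric_of_lt_one (by positivity) (by nlinarith)).mul_left _)
  refine ⟨fun n => Summable.of_norm (by simpa [] using hsum n), ?_⟩
  intro n hn
  have hn0 : (0:ℝ) < n := by exact_mod_cast hn
  have hn1 : (1:ℝ) ≤ n := by exact_mod_cast hn
  set S : ℝ := ⨆ j : ℕ, seqNorm c K a (n + 1 + j) with hSdef
  have hbddS : BddAbove (Set.range fun j : ℕ => seqNorm c K a (n + 1 + j)) := by
    refine ⟨S₀, ?_⟩
    rintro x ⟨j, rfl⟩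
    exact hS₀' _
  have hSle : ∀ j : ℕ, seqNorm c K a (n + 1 + 2*j) ≤ S := fun j => le_ciSup hbddS (2*j)
  have hS0 : 0 ≤ S := le_trans (seqNorm_nonneg c K hK a (n+1+0)) (le_ciSup hbddS 0)
  have hterm : ∀ j : ℕ, ((n:ℝ)/K) ^ (c*(n:ℝ)) * ‖a (n + 2*j + 1)‖ ≤
      (S * B * (n:ℝ) ^ (-c)) * q ^ j := by
    intro j
    have hmcast : ((n+2*j+1 : ℕ):ℝ) = (n:ℝ) + 2*(j:ℝ) + 1 := by push_cast; ring
    have hm0 : (0:ℝ) < (n:ℝ) + 2*(j:ℝ) + 1 := by positivity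
    have hKm : 0 < K / ((n:ℝ) + 2*(j:ℝ) + 1) := div_pos hK hm0
    have hs : seqNorm c K a (n+2*j+1) ≤ S := by
      have := hSle j
      rwa [show n+1+2*j = n+2*j+1 by omega] at this
    have e : ‖a (n+2*j+1)‖ = seqNorm c K a (n+2*j+1) *
        (K / ((n:ℝ) + 2*(j:ℝ) + 1)) ^ (c * ((n:ℝ) + 2*(j:ℝ) + 1)) := by
      have h := habs (n+2*j+1) (by omega)
      rwa [hmcast] at h
    have esplit : (K / ((n:ℝ) + 2*(j:ℝ) + 1)) ^ (c * ((n:ℝ) + 2*(j:ℝ) + 1)) =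
        (K / ((n:ℝ) + 2*(j:ℝ) + 1)) ^ (c * (n:ℝ)) *
          (K / ((n:ℝ) + 2*(j:ℝ) + 1)) ^ (c * (2*(j:ℝ)+1)) := by
      rw [← rpow_add hKm]; ring_nf
    have hone : ((n:ℝ)/K) ^ (c*(n:ℝ)) * (K / ((n:ℝ) + 2*(j:ℝ) + 1)) ^ (c*(n:ℝ)) ≤ 1 := by
      rw [← mul_rpow (by positivity) (by positivity)]
      apply rpow_le_one (by positivity) ?_ (by positivity)
      rw [div_mul_div_comm, div_le_one (by positivity)]
      nlinarith [Nat.cast_nonneg (α := ℝ) j]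
    calc ((n:ℝ)/K) ^ (c*(n:ℝ)) * ‖a (n + 2*j + 1)‖
        = (((n:ℝ)/K) ^ (c*(n:ℝ)) * (K / ((n:ℝ) + 2*(j:ℝ) + 1)) ^ (c*(n:ℝ))) *
            seqNorm c K a (n+2*j+1) *
            (K / ((n:ℝ) + 2*(j:ℝ) + 1)) ^ (c * (2*(j:ℝ)+1)) := by
          rw [e, esplit]; ring
      _ ≤ 1 * S * (B * (n:ℝ) ^ (-c) * q ^ j) := by
          apply mul_le_mul
            (mul_le_mul hone hs (seqNorm_nonneg c K hK a _) zero_le_one)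
            (hBkey n j hn) (rpow_nonneg hKm.le _)
          positivity
      _ = (S * B * (n:ℝ) ^ (-c)) * q ^ j := by ring
  have hsums := hsum n
  have hsumg : Summable (fun j : ℕ => (S * B * (n:ℝ) ^ (-c)) * q ^ j) :=
    (summable_geometric_of_lt_one hq0.le hq1).mul_left _
  have h3 : ∑' j : ℕ, ((n:ℝ)/K) ^ (c*(n:ℝ)) * ‖a (n + 2*j + 1)‖ ≤
      ∑' j : ℕ, (S * B * (n:ℝ) ^ (-c)) * q ^ j :=
    (hsums.mul_left _).tsum_le_tsum hterm hsumg
  have h4 : ∑' j : ℕ, (S * B * (n:ℝ) ^ (-c)) * q ^ j =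
      (S * B * (n:ℝ) ^ (-c)) * (1 - q)⁻¹ := by
    rw [tsum_mul_left, tsum_geometric_of_lt_one hq0.le hq1]
  have habs2 : ‖∑' j : ℕ, a (n + 2*j + 1)‖ ≤
      ∑' j : ℕ, ‖a (n + 2*j + 1)‖ := by
    have h := norm_tsum_le_tsum_norm (f := fun j : ℕ => a (n + 2*j + 1))
      (by simpa [] using hsums)
    simpa [] using h
  have habsn2 : ‖(n:ℂ) + 2‖ = (n:ℝ) + 2 := by
    rw [show ((n:ℂ)+2) = ((n+2:ℕ):ℂ) by push_cast; ring, Complex.norm_natCast]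
    push_cast; ring
  have hpow : (n:ℝ) ^ ((1:ℝ) - c) = (n:ℝ) * (n:ℝ) ^ (-c) := by
    rw [show (1:ℝ) - c = 1 + (-c) by ring, rpow_add hn0, rpow_one]
  have hnn : (0:ℝ) ≤ ((n:ℝ)/K) ^ (c*(n:ℝ)) := rpow_nonneg (by positivity) _
  have hrest : (0:ℝ) ≤ S * B * (n:ℝ) ^ (-c) * (1 - q)⁻¹ := by
    apply mul_nonneg (mul_nonneg (mul_nonneg hS0 hB0.le) (rpow_nonneg hn0.le _))
    rw [inv_nonneg]; linarith
  calc seqNorm c K (Dop a) n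
      = ((n:ℝ) + 2) * (((n:ℝ)/K) ^ (c*(n:ℝ)) * ‖∑' j : ℕ, a (n + 2*j + 1)‖) := by
        unfold seqNorm Dop
        rw [norm_mul, habsn2]; ring
    _ ≤ ((n:ℝ) + 2) * (((n:ℝ)/K) ^ (c*(n:ℝ)) * ∑' j : ℕ, ‖a (n + 2*j + 1)‖) := by
        apply mul_le_mul_of_nonneg_left (mul_le_mul_of_nonneg_left habs2 hnn)
        positivity
    _ = ((n:ℝ) + 2) * ∑' j : ℕ, ((n:ℝ)/K) ^ (c*(n:ℝ)) * ‖a (n + 2*j + 1)‖ := by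
        rw [tsum_mul_left]
    _ ≤ ((n:ℝ) + 2) * ((S * B * (n:ℝ) ^ (-c)) * (1 - q)⁻¹) := by
        apply mul_le_mul_of_nonneg_left _ (by positivity)
        rw [← h4]; exact h3
    _ ≤ (3 * (n:ℝ)) * ((S * B * (n:ℝ) ^ (-c)) * (1 - q)⁻¹) := by
        apply mul_le_mul_of_nonneg_right (by linarith)
        calc (0:ℝ) ≤ S * B * (n:ℝ) ^ (-c) * (1 - q)⁻¹ := hrest
          _ = (S * B * (n:ℝ) ^ (-c)) * (1 - q)⁻¹ := by ring
    _ = 3 * B / (1 - q) * (n:ℝ) ^ ((1:ℝ) - c) * S := by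
        rw [hpow, div_eq_mul_inv]; ring
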